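/- Let C₁, C₂ ∈ ℂ. Define on the open set Ω := {T ∈ ℂ : T ≠ C₁} the functions X(T) := −(T − C₁) and Y(T) := C₂(T − C₁)⁶. Then X(T) ≠ 0 on Ω and (X, Y) solves the reduced system at P₃: dX/dT = −1, dY/dT = −6Y/X on Ω. In particular the reduced system at P₃ is solved by single-valued (polynomial) functions of T, so system (6) passes the Painlevé α-test at the accessible singular point P₃. -/

import Mathlib

/-- The reduced system (28) at the accessible singular point P₃, dX/dT = −1,
dY/dT = −6Y/X, is solved by the single-valued (polynomial) functions
X(T) = −(T − C₁), Y(T) = C₂(T − C₁)⁶: system (6) passes the Painlevé α-test at P₃. -/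
theorem alpha_test_at_P3
    (C₁ C₂ : ℂ) (X Y : ℂ → ℂ)
    (hX : ∀ T, X T = -(T - C₁)) (hY : ∀ T, Y T = C₂ * (T - C₁) ^ 6) :
    ∀ T ∈ {T : ℂ | T ≠ C₁},
      X T ≠ 0 ∧ deriv X T = -1 ∧ deriv Y T = -6 * Y T / X T := by
  have hXf : X = fun T => -(T - C₁) := funext hX
  have hYf : Y = fun T => C₂ * (T - C₁) ^ 6 := funext hY
  intro T hT
  have hne : T - C₁ ≠ 0 := sub_ne_zero.mpr hT
  refine ⟨by rw [hX T]; exact neg_ne_zero.mpr hne, ?_, ?_⟩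
  · subst hXf
    have : HasDerivAt (fun T : ℂ => -(T - C₁)) (-1) T := by
      exact ((hasDerivAt_id T).sub_const C₁).neg
    exact this.deriv
  · subst hXf hYf
    have h : HasDerivAt (fun T : ℂ => C₂ * (T - C₁) ^ 6)
        (C₂ * (6 * (T - C₁) ^ 5)) T := by
      simpa using (((hasDerivAt_id T).sub_const C₁).pow 6).const_mul C₂
    rw [h.deriv]
    rw [eq_div_iff (neg_ne_zero.mpr hne)]
    ring
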